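/- Let K ⊂ ℝ^n × ℝ^n be compact with boundary a strictly convex C^∞ hypersurface. Define c : pr(K) × ℝ^n → ℝ by c(q,v) = max_{p ∈ K_q} p·v. Then c is continuous. Consequently, len_K is continuous on {γ ∈ L^{1,2}(S¹, ℝ^n) : γ(S¹) ⊂ pr(K)} with the L^{1,2} topology. -/

import Mathlib

set_option maxHeartbeats 1000000

open scoped RealInnerProductSpace
open MeasureTheory Filter

noncomputable section

abbrev Euc (n : ℕ) := EuclideanSpace ℝ (Fin n)

namespace Stmt10

variable {n : ℕ} (K : Set (Euc n × Euc n))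

def fib (q : Euc n) : Set (Euc n) := {p | (q, p) ∈ K}

def c (qv : Euc n × Euc n) : ℝ := sSup ((fun p : Euc n => ⟪p, qv.2⟫) '' fib K qv.1)

variable {K}

lemma isCompact_fib (hK : IsCompact K) (q : Euc n) : IsCompact (fib K q) := by
  have h : fib K q = Prod.snd '' (K ∩ Prod.fst ⁻¹' {q}) := by
    ext p
    constructor
    · intro hp; exact ⟨(q, p), ⟨hp, rfl⟩, rfl⟩
    · rintro ⟨⟨a, b⟩, ⟨hb, ha⟩, rfl⟩
      simp only [Set.mem_preimage, Set.mem_singleton_iff] at ha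
      subst ha; exact hb
  rw [h]
  exact ((hK.inter_right (isClosed_singleton.preimage continuous_fst)).image continuous_snd)

lemma fib_nonempty {q : Euc n} (hq : q ∈ Prod.fst '' K) : (fib K q).Nonempty := by
  obtain ⟨⟨a, b⟩, hab, rfl⟩ := hq
  exact ⟨b, hab⟩

lemma exists_max (hK : IsCompact K) {q : Euc n} (hq : q ∈ Prod.fst '' K) (v : Euc n) :
    ∃ p ∈ fib K q, (∀ p' ∈ fib K q, ⟪p', v⟫ ≤ ⟪p, v⟫) ∧ c K (q, v) = ⟪p, v⟫ := by
  have hcont : ContinuousOn (fun p : Euc n => (⟪p, v⟫ : ℝ)) (fib K q) :=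
    (continuous_id.inner continuous_const).continuousOn
  obtain ⟨p, hp, hmax⟩ := (isCompact_fib hK q).exists_isMaxOn (fib_nonempty hq) hcont
  refine ⟨p, hp, fun p' hp' => hmax hp', ?_⟩
  refine IsGreatest.csSup_eq ⟨⟨p, hp, rfl⟩, ?_⟩
  rintro y ⟨p', hp', rfl⟩
  exact hmax hp'

lemma le_c (hK : IsCompact K) {q : Euc n} {p : Euc n} (hp : p ∈ fib K q) (v : Euc n) :
    ⟪p, v⟫ ≤ c K (q, v) := by
  obtain ⟨p', _, hmax, hc⟩ := exists_max hK ⟨(q, p), hp, rfl⟩ v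
  rw [hc]; exact hmax p hp

lemma abs_c_le (hK : IsCompact K) {R : ℝ} (hR : ∀ x ∈ K, ‖x.2‖ ≤ R) {q : Euc n}
    (hq : q ∈ Prod.fst '' K) (v : Euc n) : |c K (q, v)| ≤ R * ‖v‖ := by
  obtain ⟨p, hp, _, hc⟩ := exists_max hK hq v
  rw [hc, abs_le]
  constructor
  · have := abs_real_inner_le_norm p v
    have hpR : ‖p‖ ≤ R := hR (q, p) hp
    nlinarith [norm_nonneg v, norm_nonneg p, abs_nonneg (⟪p, v⟫ : ℝ), neg_abs_le (⟪p, v⟫ : ℝ)]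
  · calc ⟪p, v⟫ ≤ ‖p‖ * ‖v‖ := real_inner_le_norm p v
    _ ≤ R * ‖v‖ := by
        have := hR (q, p) hp
        have := norm_nonneg v
        nlinarith

lemma c_lipschitz (hK : IsCompact K) {R : ℝ} (hR : ∀ x ∈ K, ‖x.2‖ ≤ R) {q : Euc n}
    (hq : q ∈ Prod.fst '' K) (v w : Euc n) : |c K (q, v) - c K (q, w)| ≤ R * ‖v - w‖ := by
  have key : ∀ v w : Euc n, c K (q, v) - c K (q, w) ≤ R * ‖v - w‖ := by
    intro v w
    obtain ⟨p, hp, _, hc⟩ := exists_max hK hq v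
    have h1 : ⟪p, w⟫ ≤ c K (q, w) := le_c hK hp w
    have h2 : (⟪p, v⟫ : ℝ) = ⟪p, w⟫ + ⟪p, v - w⟫ := by
      rw [inner_sub_right]; ring
    have h3 : (⟪p, v - w⟫ : ℝ) ≤ ‖p‖ * ‖v - w‖ := real_inner_le_norm _ _
    have hpR : ‖p‖ ≤ R := hR (q, p) hp
    have hn : (0:ℝ) ≤ ‖v - w‖ := norm_nonneg _
    nlinarith [hc]
  rw [abs_sub_le_iff]
  refine ⟨key v w, ?_⟩
  have := key w v
  rwa [norm_sub_rev] at this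

end Stmt10

namespace Stmt10
variable {n : ℕ} {K : Set (Euc n × Euc n)}

lemma fib_subsingleton (hK : IsCompact K)
    (hstrict : ∀ x ∈ frontier K, ∀ y ∈ frontier K, x ≠ y → midpoint ℝ x y ∈ interior K)
    {q : Euc n} (hqi : q ∉ interior (Prod.fst '' K)) :
    ∀ p ∈ fib K q, ∀ p' ∈ fib K q, p = p' := by
  have hfr : ∀ p ∈ fib K q, (q, p) ∈ frontier K := by
    intro p hp
    rw [hK.isClosed.frontier_eq]
    refine ⟨hp, fun hint => hqi ?_⟩
    have : q ∈ Prod.fst '' interior K := ⟨(q, p), hint, rfl⟩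
    exact interior_maximal (Set.image_mono interior_subset)
      (isOpenMap_fst _ isOpen_interior) this
  intro p hp p' hp'
  by_contra hne
  have hmid := hstrict _ (hfr p hp) _ (hfr p' hp') (by simp [Prod.ext_iff]; tauto)
  have hmq : (midpoint ℝ ((q:Euc n), p) (q, p')).1 = q := by
    simp [midpoint, Prod.ext_iff]
  apply hqi
  have : q ∈ Prod.fst '' interior K := ⟨_, hmid, hmq⟩
  exact interior_maximal (Set.image_mono interior_subset)
    (isOpenMap_fst _ isOpen_interior) this

lemma key (hK : IsCompact K) {q : ℕ → Euc n} {q₀ : Euc n}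
    (hq : ∀ᶠ k in atTop, q k ∈ Prod.fst '' K)
    (hlim : Tendsto q atTop (nhds q₀)) (v₀ : Euc n) {P : ℕ → Prop}
    (hP : ∃ᶠ k in atTop, P k) :
    ∃ b ∈ fib K q₀, ∃ φ : ℕ → ℕ, StrictMono φ ∧ (∀ j, P (φ j)) ∧
      Tendsto (fun j => c K (q (φ j), v₀)) atTop (nhds ⟪b, v₀⟫) := by
  obtain ⟨φ, hφ, hPφ⟩ := Filter.extraction_of_frequently_atTop (hP.and_eventually hq)
  choose p hp hrest using fun j => exists_max hK (hPφ j).2 v₀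
  obtain ⟨⟨a, b⟩, hab, ψ, hψ, hten⟩ := hK.isSeqCompact (x := fun j => (q (φ j), p j))
    (fun j => hp j)
  have hq1 : Tendsto (fun j => q (φ (ψ j))) atTop (nhds a) :=
    (continuous_fst.tendsto _).comp hten
  have hq2 : Tendsto (fun j => q (φ (ψ j))) atTop (nhds q₀) :=
    hlim.comp ((hφ.comp hψ).tendsto_atTop)
  have ha : a = q₀ := tendsto_nhds_unique hq1 hq2
  subst ha
  refine ⟨b, hab, φ ∘ ψ, hφ.comp hψ, fun j => (hPφ (ψ j)).1, ?_⟩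
  have hb : Tendsto (fun j => p (ψ j)) atTop (nhds b) := (continuous_snd.tendsto _).comp hten
  have : Tendsto (fun j => (⟪p (ψ j), v₀⟫ : ℝ)) atTop (nhds ⟪b, v₀⟫) :=
    ((continuous_id.inner continuous_const).tendsto _).comp hb
  refine this.congr fun j => ?_
  exact ((hrest (ψ j)).2).symm

end Stmt10

namespace Stmt10
variable {n : ℕ} {K : Set (Euc n × Euc n)}

lemma tendsto_c (hK : IsCompact K) (hconv : Convex ℝ K)
    (hstrict : ∀ x ∈ frontier K, ∀ y ∈ frontier K, x ≠ y → midpoint ℝ x y ∈ interior K)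
    {R : ℝ} (hR0 : 0 ≤ R) (hR : ∀ x ∈ K, ‖x.2‖ ≤ R)
    {q : ℕ → Euc n} {q₀ : Euc n} (hq : ∀ᶠ k in atTop, q k ∈ Prod.fst '' K)
    (hq₀ : q₀ ∈ Prod.fst '' K) (hlim : Tendsto q atTop (nhds q₀)) (v₀ : Euc n) :
    Tendsto (fun k => c K (q k, v₀)) atTop (nhds (c K (q₀, v₀))) := by
  rw [tendsto_order]
  constructor
  · -- lower semicontinuity
    intro a ha
    by_cases hin : q₀ ∈ interior (Prod.fst '' K)
    · -- interior case: convex combination trick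
      obtain ⟨r, hr, hball⟩ := Metric.isOpen_iff.1 isOpen_interior q₀ hin
      obtain ⟨p₀, hp₀, _, hc₀⟩ := exists_max hK hq₀ v₀
      set ε := c K (q₀, v₀) - a with hε
      have hε0 : 0 < ε := by simp [hε]; linarith
      set M := 8 * (R + 1) * (‖v₀‖ + 1) with hM
      have hM0 : 0 < M := by positivity
      set δ := min (r / 2) (ε * r / M) with hδdef
      have hδ0 : 0 < δ := by
        apply lt_min (by linarith)
        positivity
      have hev : ∀ᶠ k in atTop, q k ∈ Metric.ball q₀ δ :=
        hlim (Metric.ball_mem_nhds q₀ hδ0)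
      filter_upwards [hq, hev] with k hk hkd
      by_cases hqk : q k = q₀
      · rw [hqk]; linarith
      · set d := ‖q k - q₀‖ with hd
        have hd0 : 0 < d := by
          rw [hd, norm_pos_iff]; exact sub_ne_zero.2 hqk
        have hdδ : d < δ := by
          rw [hd, ← dist_eq_norm]; exact Metric.mem_ball.1 hkd
        set u := q₀ + (r / (2 * d)) • (q k - q₀) with hu
        have hu_ball : u ∈ Metric.ball q₀ r := by
          rw [Metric.mem_ball, dist_eq_norm, hu]
          have : q₀ + (r / (2 * d)) • (q k - q₀) - q₀ = (r / (2 * d)) • (q k - q₀) := by abel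
          rw [this, norm_smul, Real.norm_eq_abs, abs_of_pos (by positivity), ← hd]
          have hdne : d ≠ 0 := ne_of_gt hd0
          have : r / (2 * d) * d = r / 2 := by
            field_simp
          rw [this]
          linarith
        have hu_mem : u ∈ Prod.fst '' K := interior_subset (hball hu_ball)
        obtain ⟨π, hπ⟩ := fib_nonempty hu_mem
        set t := 2 * d / r with ht
        have ht0 : 0 < t := by positivity
        have ht1 : t < 1 := by
          rw [ht, div_lt_one hr]
          have : δ ≤ r / 2 := min_le_left _ _
          linarith
        clear_value ε M δ d u t
        have hscal : t * (r / (2 * d)) = 1 := by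
          rw [ht]; field_simp
        have hcomb : ((1 - t) • ((q₀, p₀) : Euc n × Euc n) + t • (u, π)) ∈ K :=
          hconv hp₀ hπ (by linarith) (le_of_lt ht0) (by ring)
        have hfst : (1 - t) • q₀ + t • u = q k := by
          rw [hu]
          have h1 : (1 - t) • q₀ + t • (q₀ + (r / (2 * d)) • (q k - q₀)) =
              q₀ + (t * (r / (2 * d))) • (q k - q₀) := by module
          rw [h1, hscal, one_smul]; abel
        have hmem : ((1 - t) • p₀ + t • π) ∈ fib K (q k) := by
          have : ((1 - t) • ((q₀, p₀) : Euc n × Euc n) + t • (u, π)) =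
              (q k, (1 - t) • p₀ + t • π) := by
            rw [Prod.ext_iff]
            exact ⟨hfst, rfl⟩
          rw [this] at hcomb
          exact hcomb
        have hge : c K (q k, v₀) ≥ ⟪(1 - t) • p₀ + t • π, v₀⟫ := le_c hK hmem v₀
        have hinner : (⟪(1 - t) • p₀ + t • π, v₀⟫ : ℝ) =
            (1 - t) * ⟪p₀, v₀⟫ + t * ⟪π, v₀⟫ := by
          rw [inner_add_left, real_inner_smul_left, real_inner_smul_left]
        have hπR : |(⟪π, v₀⟫ : ℝ)| ≤ R * ‖v₀‖ := by
          calc |(⟪π, v₀⟫ : ℝ)| ≤ ‖π‖ * ‖v₀‖ := abs_real_inner_le_norm π v₀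
          _ ≤ R * ‖v₀‖ := by
              have := hR (u, π) hπ
              have := norm_nonneg v₀
              nlinarith
        have hp₀R : |(⟪p₀, v₀⟫ : ℝ)| ≤ R * ‖v₀‖ := by
          calc |(⟪p₀, v₀⟫ : ℝ)| ≤ ‖p₀‖ * ‖v₀‖ := abs_real_inner_le_norm p₀ v₀
          _ ≤ R * ‖v₀‖ := by
              have := hR (q₀, p₀) hp₀
              have := norm_nonneg v₀
              nlinarith
        -- numeric conclusion
        have hdM : d * M < ε * r := by
          have h2 : δ ≤ ε * r / M := hδdef ▸ min_le_right _ _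
          have := (lt_div_iff₀ hM0).1 (lt_of_lt_of_le hdδ h2)
          exact this
        have htsmall : t * (2 * R * ‖v₀‖) < ε := by
          rw [ht]
          rw [div_mul_eq_mul_div, div_lt_iff₀ hr]
          have hRv : 2 * R * ‖v₀‖ * 2 ≤ M := by
            rw [hM]
            have h1 : 0 ≤ R := hR0
            have h2 : (0:ℝ) ≤ ‖v₀‖ := norm_nonneg _
            nlinarith
          calc 2 * d * (2 * R * ‖v₀‖) = d * (2 * R * ‖v₀‖ * 2) := by ring
          _ ≤ d * M := by
              apply mul_le_mul_of_nonneg_left hRv (le_of_lt hd0)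
          _ < ε * r := hdM
        have habs : (⟪π, v₀⟫ : ℝ) - ⟪p₀, v₀⟫ ≥ -(2 * R * ‖v₀‖) := by
          obtain ⟨ha1, ha2⟩ := abs_le.1 hπR
          obtain ⟨ha3, ha4⟩ := abs_le.1 hp₀R
          linarith
        have : c K (q k, v₀) ≥ c K (q₀, v₀) - t * (2 * R * ‖v₀‖) := by
          rw [hc₀]
          have : (1 - t) * ⟪p₀, v₀⟫ + t * ⟪π, v₀⟫ =
              ⟪p₀, v₀⟫ + t * (⟪π, v₀⟫ - ⟪p₀, v₀⟫) := by ring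
          rw [hinner, this] at hge
          have h3 : t * (⟪π, v₀⟫ - ⟪p₀, v₀⟫) ≥ -(t * (2 * R * ‖v₀‖)) := by
            have := mul_le_mul_of_nonneg_left habs (le_of_lt ht0)
            nlinarith
          linarith
        linarith
    · -- frontier case: singleton fiber
      have hsub := fib_subsingleton hK hstrict hin
      obtain ⟨p₀, hp₀, _, hc₀⟩ := exists_max hK hq₀ v₀
      by_contra h
      have hfreq : ∃ᶠ k in atTop, c K (q k, v₀) ≤ a := by
        rw [Filter.not_eventually] at h
        exact h.mono fun k hk => not_lt.1 hk
      obtain ⟨b, hb, φ, hφ, hPa, hten⟩ := key hK hq hlim v₀ hfreq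
      have hbp : b = p₀ := hsub b hb p₀ hp₀
      have hle : (⟪b, v₀⟫ : ℝ) ≤ a := le_of_tendsto hten (Filter.Eventually.of_forall hPa)
      rw [hbp, ← hc₀] at hle
      linarith
  · -- upper semicontinuity
    intro bb hbb
    by_contra h
    have hfreq : ∃ᶠ k in atTop, bb ≤ c K (q k, v₀) := by
      rw [Filter.not_eventually] at h
      exact h.mono fun k hk => not_lt.1 hk
    obtain ⟨b, hb, φ, hφ, hPa, hten⟩ := key hK hq hlim v₀ hfreq
    have h1 : bb ≤ ⟪b, v₀⟫ := ge_of_tendsto hten (Filter.Eventually.of_forall hPa)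
    have h2 : (⟪b, v₀⟫ : ℝ) ≤ c K (q₀, v₀) := le_c hK hb v₀
    linarith

end Stmt10

namespace Stmt10
variable {n : ℕ} {K : Set (Euc n × Euc n)}

lemma continuousOn_c (hK : IsCompact K) (hconv : Convex ℝ K)
    (hstrict : ∀ x ∈ frontier K, ∀ y ∈ frontier K, x ≠ y → midpoint ℝ x y ∈ interior K)
    {R : ℝ} (hR0 : 0 ≤ R) (hR : ∀ x ∈ K, ‖x.2‖ ≤ R) :
    ContinuousOn (c K) ((Prod.fst '' K) ×ˢ (Set.univ : Set (Euc n))) := by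
  rintro ⟨q₀, v₀⟩ hx
  have hq₀ : q₀ ∈ Prod.fst '' K := hx.1
  rw [ContinuousWithinAt, tendsto_iff_seq_tendsto]
  intro u hu
  rw [tendsto_nhdsWithin_iff] at hu
  obtain ⟨hu1, hu2⟩ := hu
  have hq : ∀ᶠ k in atTop, (u k).1 ∈ Prod.fst '' K := hu2.mono fun k hk => hk.1
  have hlim1 : Tendsto (fun k => (u k).1) atTop (nhds q₀) := (continuous_fst.tendsto _).comp hu1
  have hlim2 : Tendsto (fun k => (u k).2) atTop (nhds v₀) := (continuous_snd.tendsto _).comp hu1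
  have h2 : Tendsto (fun k => c K ((u k).1, v₀)) atTop (nhds (c K (q₀, v₀))) :=
    tendsto_c hK hconv hstrict hR0 hR hq hq₀ hlim1 v₀
  have hgten : Tendsto (fun k => R * ‖(u k).2 - v₀‖) atTop (nhds 0) := by
    have h0 : Tendsto (fun k => ‖(u k).2 - v₀‖) atTop (nhds 0) := by
      have := (hlim2.sub (tendsto_const_nhds (x := v₀))).norm
      simpa using this
    have := h0.const_mul R
    simpa using this
  have h1 : Tendsto (fun k => c K (u k) - c K ((u k).1, v₀)) atTop (nhds 0) := by
    apply squeeze_zero_norm' _ hgten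
    filter_upwards [hq] with k hk
    have := c_lipschitz hK hR hk ((u k).2) v₀
    rw [Real.norm_eq_abs]
    have heta : ((u k).1, (u k).2) = u k := Prod.mk.eta
    rw [← heta]
    exact this
  have hsum := h1.add h2
  rw [zero_add] at hsum
  have : (fun k => (c K (u k) - c K ((u k).1, v₀)) + c K ((u k).1, v₀)) = fun k => c K (u k) := by
    funext k; ring
  rw [this] at hsum
  exact hsum

end Stmt10

namespace Stmt10
variable {n : ℕ} {K : Set (Euc n × Euc n)}

lemma aesm_comp (hK : IsCompact K) (hconv : Convex ℝ K)
    (hstrict : ∀ x ∈ frontier K, ∀ y ∈ frontier K, x ≠ y → midpoint ℝ x y ∈ interior K)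
    {R : ℝ} (hR0 : 0 ≤ R) (hR : ∀ x ∈ K, ‖x.2‖ ≤ R)
    {μ : Measure ℝ} {γ g : ℝ → Euc n}
    (hγ : Continuous γ) (hγK : ∀ t, γ t ∈ Prod.fst '' K)
    (hg : AEStronglyMeasurable g μ) :
    AEStronglyMeasurable (fun t => c K (γ t, g t)) μ := by
  set S := (Prod.fst '' K) ×ˢ (Set.univ : Set (Euc n)) with hS
  have hcS : Continuous (S.restrict (c K)) :=
    (continuousOn_c hK hconv hstrict hR0 hR).restrict
  have hmem : ∀ t, (γ t, g t) ∈ S := fun t => ⟨hγK t, trivial⟩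
  have hpair : AEMeasurable (fun t => (γ t, g t)) μ :=
    hγ.aemeasurable.prodMk hg.aemeasurable
  have hsub : AEMeasurable (fun t => (⟨(γ t, g t), hmem t⟩ : S)) μ :=
    hpair.subtype_mk
  exact (hcS.measurable.comp_aemeasurable hsub).aestronglyMeasurable

end Stmt10
/-- for a compact convex body `K ⊆ ℝ^n × ℝ^n` with strictly convex
boundary, the fiberwise support function `c(q,v) = max_{p ∈ K_q} ⟪p, v⟫` is
continuous on `pr(K) × ℝ^n`; consequently `len_K` is (sequentially) continuous on
the set of `L^{1,2}` loops with image in `pr(K)`. -/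
theorem stmt10 (n : ℕ) (K : Set (Euc n × Euc n)) (hK : IsCompact K)
    (hconv : Convex ℝ K) (hint : (interior K).Nonempty)
    (hstrict : ∀ x ∈ frontier K, ∀ y ∈ frontier K, x ≠ y → midpoint ℝ x y ∈ interior K) :
    ContinuousOn
        (fun qv : Euc n × Euc n =>
          sSup ((fun p : Euc n => ⟪p, qv.2⟫) '' {p : Euc n | (qv.1, p) ∈ K}))
        ((Prod.fst '' K) ×ˢ (Set.univ : Set (Euc n))) ∧
      ∀ (γ g : ℕ → ℝ → Euc n) (γ₀ g₀ : ℝ → Euc n),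
        (∀ k, Function.Periodic (γ k) 1) → Function.Periodic γ₀ 1 →
        (∀ k, Continuous (γ k)) → Continuous γ₀ →
        (∀ k, ∀ᵐ t : ℝ, HasDerivAt (γ k) (g k t) t) →
        (∀ᵐ t : ℝ, HasDerivAt γ₀ (g₀ t) t) →
        (∀ k, MemLp (g k) 2 (volume.restrict (Set.Icc (0 : ℝ) 1))) →
        (MemLp g₀ 2 (volume.restrict (Set.Icc (0 : ℝ) 1))) →
        (∀ k t, γ k t ∈ Prod.fst '' K) → (∀ t, γ₀ t ∈ Prod.fst '' K) →
        Tendsto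
          (fun k => ∫ t in (0 : ℝ)..1, (‖γ k t - γ₀ t‖ ^ 2 + ‖g k t - g₀ t‖ ^ 2))
          atTop (nhds 0) →
        Tendsto
          (fun k => ∫ t in (0 : ℝ)..1,
            sSup ((fun p : Euc n => ⟪p, g k t⟫) '' {p : Euc n | (γ k t, p) ∈ K}))
          atTop
          (nhds (∫ t in (0 : ℝ)..1,
            sSup ((fun p : Euc n => ⟪p, g₀ t⟫) '' {p : Euc n | (γ₀ t, p) ∈ K}))) := by
  obtain ⟨R₀, hR₀⟩ := hK.isBounded.exists_norm_le
  have hR0 : (0:ℝ) ≤ max R₀ 0 := le_max_right _ _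
  have hR : ∀ x ∈ K, ‖x.2‖ ≤ max R₀ 0 :=
    fun x hx => (norm_snd_le x).trans ((hR₀ x hx).trans (le_max_left _ _))
  set R := max R₀ 0 with hRdef
  constructor
  · exact Stmt10.continuousOn_c hK hconv hstrict hR0 hR
  · intro γ g γ₀ g₀ _ _ hγc hγ₀c _ _ hgmem hg₀mem hγK hγ₀K hT
    set μ := volume.restrict (Set.Ioc (0:ℝ) 1) with hμ
    have hμuniv : μ Set.univ = 1 := by
      rw [hμ, Measure.restrict_apply_univ, Real.volume_Ioc]; norm_num
    haveI : IsFiniteMeasure μ := ⟨by rw [hμuniv]; exact ENNReal.one_lt_top⟩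
    have hμle : μ ≤ volume.restrict (Set.Icc (0:ℝ) 1) := by
      rw [hμ]; exact Measure.restrict_mono Set.Ioc_subset_Icc_self le_rfl
    have hgk : ∀ k, MemLp (g k) 2 μ := fun k => (hgmem k).mono_measure hμle
    have hg₀ : MemLp g₀ 2 μ := hg₀mem.mono_measure hμle
    simp only [intervalIntegral.integral_of_le zero_le_one] at hT ⊢
    rw [← hμ] at hT ⊢
    -- integrability of the squared differences
    have hAint : ∀ k, Integrable (fun t => ‖γ k t - γ₀ t‖ ^ 2) μ := by
      intro k
      have hc : Continuous (fun t => ‖γ k t - γ₀ t‖ ^ 2) := (((hγc k).sub hγ₀c).norm).pow 2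
      rw [hμ]
      exact hc.integrableOn_Ioc
    have hBint : ∀ k, Integrable (fun t => ‖g k t - g₀ t‖ ^ 2) μ :=
      fun k => (((hgk k).sub hg₀).norm).integrable_sq
    have hsumint : ∀ k, Integrable (fun t => ‖γ k t - γ₀ t‖ ^ 2 + ‖g k t - g₀ t‖ ^ 2) μ :=
      fun k => (hAint k).add (hBint k)
    -- the two halves tend to zero
    have hA : Tendsto (fun k => ∫ t, ‖γ k t - γ₀ t‖ ^ 2 ∂μ) atTop (nhds 0) := by
      apply squeeze_zero (fun k => integral_nonneg fun t => by positivity) (fun k => ?_) hT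
      exact integral_mono (hAint k) (hsumint k) fun t => le_add_of_nonneg_right (by positivity)
    have hB : Tendsto (fun k => ∫ t, ‖g k t - g₀ t‖ ^ 2 ∂μ) atTop (nhds 0) := by
      apply squeeze_zero (fun k => integral_nonneg fun t => by positivity) (fun k => ?_) hT
      exact integral_mono (hBint k) (hsumint k) fun t => le_add_of_nonneg_left (by positivity)
    -- L¹ convergence of the derivatives
    have hDint : ∀ k, Integrable (fun t => ‖g k t - g₀ t‖) μ := fun k =>
      (memLp_one_iff_integrable.1 (((hgk k).sub hg₀).mono_exponent one_le_two)).norm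
    have hD : Tendsto (fun k => ∫ t, ‖g k t - g₀ t‖ ∂μ) atTop (nhds 0) := by
      rw [Metric.tendsto_atTop]
      intro ε hε
      obtain ⟨N, hN⟩ := Metric.tendsto_atTop.1 hB (ε ^ 2 / 8) (by positivity)
      refine ⟨N, fun k hk => ?_⟩
      have hBk : ∫ t, ‖g k t - g₀ t‖ ^ 2 ∂μ < ε ^ 2 / 8 := by
        have := hN k hk
        rwa [Real.dist_eq, sub_zero,
          abs_of_nonneg (integral_nonneg fun t => by positivity)] at this
      have hpt : ∀ t, ‖g k t - g₀ t‖ ≤ ε / 4 + ‖g k t - g₀ t‖ ^ 2 / ε := by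
        intro t
        have h1 := sq_nonneg (‖g k t - g₀ t‖ - ε / 2)
        have h2 : (0:ℝ) < ε := hε
        rw [← sub_nonneg]
        have h3 : ε / 4 + ‖g k t - g₀ t‖ ^ 2 / ε - ‖g k t - g₀ t‖ =
            (‖g k t - g₀ t‖ - ε / 2) ^ 2 / ε := by
          field_simp
          ring
        rw [h3]
        positivity
      have hle : ∫ t, ‖g k t - g₀ t‖ ∂μ ≤ ε / 4 + (∫ t, ‖g k t - g₀ t‖ ^ 2 ∂μ) / ε := by
        have hint2 : Integrable (fun t => ε / 4 + ‖g k t - g₀ t‖ ^ 2 / ε) μ :=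
          (integrable_const _).add ((hBint k).div_const ε)
        calc ∫ t, ‖g k t - g₀ t‖ ∂μ ≤ ∫ t, (ε / 4 + ‖g k t - g₀ t‖ ^ 2 / ε) ∂μ :=
              integral_mono (hDint k) hint2 hpt
        _ = ε / 4 + (∫ t, ‖g k t - g₀ t‖ ^ 2 ∂μ) / ε := by
            rw [integral_add (integrable_const _) ((hBint k).div_const ε),
              integral_const, integral_div, measureReal_def, hμuniv]
            simp
      have hfinal : ∫ t, ‖g k t - g₀ t‖ ∂μ < ε := by
        have h4 : (∫ t, ‖g k t - g₀ t‖ ^ 2 ∂μ) / ε < ε / 8 := by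
          rw [div_lt_iff₀ hε]
          nlinarith
        linarith
      rw [Real.dist_eq, sub_zero, abs_of_nonneg (integral_nonneg fun t => norm_nonneg _)]
      exact hfinal
    -- measurability and integrability of the support-function integrands
    have hFm : ∀ k, AEStronglyMeasurable (fun t => Stmt10.c K (γ k t, g k t)) μ := fun k =>
      Stmt10.aesm_comp hK hconv hstrict hR0 hR (hγc k) (hγK k) (hgk k).aestronglyMeasurable
    have hGm : ∀ k, AEStronglyMeasurable (fun t => Stmt10.c K (γ k t, g₀ t)) μ := fun k =>
      Stmt10.aesm_comp hK hconv hstrict hR0 hR (hγc k) (hγK k) hg₀.aestronglyMeasurable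
    have hgint : ∀ k, Integrable (fun t => ‖g k t‖) μ := fun k =>
      (memLp_one_iff_integrable.1 ((hgk k).mono_exponent one_le_two)).norm
    have hg₀int : Integrable (fun t => ‖g₀ t‖) μ :=
      (memLp_one_iff_integrable.1 (hg₀.mono_exponent one_le_two)).norm
    have hFbound : ∀ k t, ‖Stmt10.c K (γ k t, g k t)‖ ≤ R * ‖g k t‖ := fun k t => by
      rw [Real.norm_eq_abs]; exact Stmt10.abs_c_le hK hR (hγK k t) (g k t)
    have hGbound : ∀ k t, ‖Stmt10.c K (γ k t, g₀ t)‖ ≤ R * ‖g₀ t‖ := fun k t => by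
      rw [Real.norm_eq_abs]; exact Stmt10.abs_c_le hK hR (hγK k t) (g₀ t)
    have hFint : ∀ k, Integrable (fun t => Stmt10.c K (γ k t, g k t)) μ := fun k =>
      Integrable.mono' ((hgint k).const_mul R) (hFm k) (ae_of_all _ (hFbound k))
    have hGint : ∀ k, Integrable (fun t => Stmt10.c K (γ k t, g₀ t)) μ := fun k =>
      Integrable.mono' (hg₀int.const_mul R) (hGm k) (ae_of_all _ (hGbound k))
    -- step (i): difference of the two integral sequences tends to 0
    have hdiff : Tendsto (fun k => (∫ t, Stmt10.c K (γ k t, g k t) ∂μ) -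
        ∫ t, Stmt10.c K (γ k t, g₀ t) ∂μ) atTop (nhds 0) := by
      have hRD : Tendsto (fun k => R * ∫ t, ‖g k t - g₀ t‖ ∂μ) atTop (nhds 0) := by
        have := hD.const_mul R
        simpa using this
      apply squeeze_zero_norm' _ hRD
      filter_upwards with k
      rw [← integral_sub (hFint k) (hGint k)]
      calc ‖∫ t, (Stmt10.c K (γ k t, g k t) - Stmt10.c K (γ k t, g₀ t)) ∂μ‖ ≤
          ∫ t, ‖Stmt10.c K (γ k t, g k t) - Stmt10.c K (γ k t, g₀ t)‖ ∂μ :=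
            norm_integral_le_integral_norm _
      _ ≤ ∫ t, R * ‖g k t - g₀ t‖ ∂μ := by
          apply integral_mono ((hFint k).sub (hGint k)).norm ((hDint k).const_mul R)
          intro t
          simp only [Real.norm_eq_abs]
          exact Stmt10.c_lipschitz hK hR (hγK k t) (g k t) (g₀ t)
      _ = R * ∫ t, ‖g k t - g₀ t‖ ∂μ := integral_const_mul R _
    -- step (ii)
    have hGten : Tendsto (fun k => ∫ t, Stmt10.c K (γ k t, g₀ t) ∂μ) atTop
        (nhds (∫ t, Stmt10.c K (γ₀ t, g₀ t) ∂μ)) := by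
      apply tendsto_of_subseq_tendsto
      intro ns hns
      have hAn : Tendsto (fun j => ∫ t, ‖γ (ns j) t - γ₀ t‖ ^ 2 ∂μ) atTop (nhds 0) :=
        hA.comp hns
      -- Memℒp of the continuous differences
      have hmem2 : ∀ j, MemLp (fun t => γ (ns j) t - γ₀ t) 2 μ := by
        intro j
        have hc : Continuous (fun t => γ (ns j) t - γ₀ t) := (hγc (ns j)).sub hγ₀c
        obtain ⟨C, hC⟩ := (isCompact_Icc (a := (0:ℝ)) (b := 1)).exists_bound_of_continuousOn
          hc.continuousOn
        refine MemLp.of_bound hc.aestronglyMeasurable C ?_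
        have hmemae : ∀ᵐ t ∂μ, t ∈ Set.Ioc (0:ℝ) 1 := by
          rw [hμ]; exact ae_restrict_mem measurableSet_Ioc
        exact hmemae.mono fun t ht => hC t (Set.Ioc_subset_Icc_self ht)
      have heq : ∀ j, eLpNorm (fun t => γ (ns j) t - γ₀ t) 2 μ =
          ENNReal.ofReal ((∫ t, ‖γ (ns j) t - γ₀ t‖ ^ 2 ∂μ) ^ (1/2 : ℝ)) := by
        intro j
        rw [(hmem2 j).eLpNorm_eq_integral_rpow_norm two_ne_zero ENNReal.ofNat_ne_top,
          ENNReal.toReal_ofNat]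
        congr 2
        · apply integral_congr_ae
          filter_upwards with t
          rw [show ((2:ℝ)) = ((2:ℕ):ℝ) by norm_num, Real.rpow_natCast]
        · norm_num
      have hsn : Tendsto (fun j => eLpNorm (fun t => γ (ns j) t - γ₀ t) 2 μ) atTop (nhds 0) := by
        simp only [heq]
        have h1 : Tendsto (fun j => (∫ t, ‖γ (ns j) t - γ₀ t‖ ^ 2 ∂μ) ^ (1/2 : ℝ)) atTop
            (nhds ((0:ℝ) ^ (1/2 : ℝ))) :=
          ((Real.continuousAt_rpow_const 0 (1/2) (Or.inr (by norm_num))).tendsto).comp hAn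
        have h2 := (ENNReal.continuous_ofReal.tendsto _).comp h1
        simpa [Real.zero_rpow, Function.comp_def] using h2
      have htim : TendstoInMeasure μ (fun j => γ (ns j)) atTop γ₀ := by
        apply tendstoInMeasure_of_tendsto_eLpNorm (p := 2) two_ne_zero
          (fun j => (hγc (ns j)).aestronglyMeasurable) hγ₀c.aestronglyMeasurable
        exact hsn
      obtain ⟨ms, hms, hae⟩ := htim.exists_seq_tendsto_ae
      refine ⟨ms, ?_⟩
      apply tendsto_integral_of_dominated_convergence (fun t => R * ‖g₀ t‖)
      · exact fun j => hGm (ns (ms j))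
      · exact hg₀int.const_mul R
      · exact fun j => ae_of_all _ fun t => hGbound (ns (ms j)) t
      · refine hae.mono fun t ht => ?_
        exact Stmt10.tendsto_c hK hconv hstrict hR0 hR
          (Filter.Eventually.of_forall fun j => hγK (ns (ms j)) t) (hγ₀K t) ht (g₀ t)
    have hfinal := hdiff.add hGten
    rw [zero_add] at hfinal
    have hcongr : (fun k => ((∫ t, Stmt10.c K (γ k t, g k t) ∂μ) -
        ∫ t, Stmt10.c K (γ k t, g₀ t) ∂μ) + ∫ t, Stmt10.c K (γ k t, g₀ t) ∂μ) =
        fun k => ∫ t, Stmt10.c K (γ k t, g k t) ∂μ := by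
      funext k; ring
    rw [hcongr] at hfinal
    exact hfinal
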